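/- If the coefficients of L satisfy a_k(t) = (−1)^k a_k(T − t) for a.e. t ∈ I and all k = 0,…,2n−1, then the spectra of the two mixed problems coincide: Λ_{M1}[T] = Λ_{M2}[T]. -/
import Mathlib


open MeasureTheory Set

/-- `u` belongs to the space `W^{m,1}([0,T])`: it is of class `C^{m-1}` on `[0,T]` and
its `(m-1)`-st derivative is absolutely continuous, expressed via the fundamental
theorem of calculus with an integrable `m`-th derivative. -/
def MemW (m : ℕ) (T : ℝ) (u : ℝ → ℝ) : Prop :=
  (∀ k < m, ContinuousOn (iteratedDeriv k u) (Icc 0 T)) ∧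
  IntervalIntegrable (iteratedDeriv m u) volume 0 T ∧
  ∀ t ∈ Icc 0 T,
    iteratedDeriv (m - 1) u t
      = iteratedDeriv (m - 1) u 0 + ∫ s in (0:ℝ)..t, iteratedDeriv m u s

/-- The `2n`-th order linear differential operator
`L u = u^{(2n)} + a_{2n-1} u^{(2n-1)} + ⋯ + a_1 u' + a_0 u`. -/
noncomputable def Lop (n : ℕ) (a : ℕ → ℝ → ℝ) (u : ℝ → ℝ) (t : ℝ) : ℝ :=
  iteratedDeriv (2 * n) u t + ∑ k ∈ Finset.range (2 * n), a k t * iteratedDeriv k u t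

/-- Neumann space on `[0,T]`. -/
def XN (n : ℕ) (T : ℝ) : Set (ℝ → ℝ) :=
  {u | MemW (2 * n) T u ∧ ∀ k < n,
    iteratedDeriv (2 * k + 1) u 0 = 0 ∧ iteratedDeriv (2 * k + 1) u T = 0}

/-- Dirichlet space on `[0,T]`. -/
def XD (n : ℕ) (T : ℝ) : Set (ℝ → ℝ) :=
  {u | MemW (2 * n) T u ∧ ∀ k < n,
    iteratedDeriv (2 * k) u 0 = 0 ∧ iteratedDeriv (2 * k) u T = 0}

/-- Mixed space 1 on `[0,T]`. -/
def XM1 (n : ℕ) (T : ℝ) : Set (ℝ → ℝ) :=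
  {u | MemW (2 * n) T u ∧ ∀ k < n,
    iteratedDeriv (2 * k + 1) u 0 = 0 ∧ iteratedDeriv (2 * k) u T = 0}

/-- Mixed space 2 on `[0,T]`. -/
def XM2 (n : ℕ) (T : ℝ) : Set (ℝ → ℝ) :=
  {u | MemW (2 * n) T u ∧ ∀ k < n,
    iteratedDeriv (2 * k) u 0 = 0 ∧ iteratedDeriv (2 * k + 1) u T = 0}

/-- Periodic space on `[0,T]`. -/
def XP (n : ℕ) (T : ℝ) : Set (ℝ → ℝ) :=
  {u | MemW (2 * n) T u ∧ ∀ k < 2 * n, iteratedDeriv k u 0 = iteratedDeriv k u T}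

/-- Antiperiodic space on `[0,T]`. -/
def XA (n : ℕ) (T : ℝ) : Set (ℝ → ℝ) :=
  {u | MemW (2 * n) T u ∧ ∀ k < 2 * n, iteratedDeriv k u 0 = -iteratedDeriv k u T}

/-- The operator `Lop n a` is nonresonant in `X`: the only solution in `X` of the
homogeneous equation (a.e. on `[0,T]`) is the trivial one. -/
def Nonresonant (n : ℕ) (a : ℕ → ℝ → ℝ) (T : ℝ) (X : Set (ℝ → ℝ)) : Prop :=
  ∀ u ∈ X, (∀ᵐ t ∂volume, t ∈ Icc 0 T → Lop n a u t = 0) →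
    ∀ t ∈ Icc 0 T, u t = 0

/-- `G` is the Green's function of `(Lop n a, X)` on `[0,T]`: it is continuous on the
square and, for every `σ ∈ L¹(0,T)`, `t ↦ ∫₀ᵀ G t s σ s ds` is the unique solution in
`X` of `L u = σ` a.e. on `[0,T]`. -/
def IsGreen (n : ℕ) (a : ℕ → ℝ → ℝ) (T : ℝ) (X : Set (ℝ → ℝ)) (G : ℝ → ℝ → ℝ) : Prop :=
  ContinuousOn (fun p : ℝ × ℝ => G p.1 p.2) (Icc 0 T ×ˢ Icc 0 T) ∧
  ∀ σ : ℝ → ℝ, IntervalIntegrable σ volume 0 T →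
    ((fun t => ∫ s in (0:ℝ)..T, G t s * σ s) ∈ X ∧
     (∀ᵐ t ∂volume, t ∈ Icc 0 T →
        Lop n a (fun t' => ∫ s in (0:ℝ)..T, G t' s * σ s) t = σ t) ∧
     ∀ v ∈ X, (∀ᵐ t ∂volume, t ∈ Icc 0 T → Lop n a v t = σ t) →
       ∀ t ∈ Icc 0 T, v t = ∫ s in (0:ℝ)..T, G t s * σ s)

/-- Coefficients of the extended operator `L̃` on `[0,2T]`: the even-order coefficients
are extended evenly about `t = T`, the odd-order ones oddly. -/
noncomputable def tildeCoef (T : ℝ) (a : ℕ → ℝ → ℝ) : ℕ → ℝ → ℝ :=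
  fun k t => if t ≤ T then a k t else (-1 : ℝ) ^ k * a k (2 * T - t)

/-- Coefficients of the reflected operator `Ľ`:
`Ľ u = u^{(2n)} + Σ (-1)^k a_k(T - t) u^{(k)}`. -/
noncomputable def checkCoef (T : ℝ) (a : ℕ → ℝ → ℝ) : ℕ → ℝ → ℝ :=
  fun k t => (-1 : ℝ) ^ k * a k (T - t)

/-- `u` is an eigenfunction of `Lop n a` in `X` associated to the eigenvalue `lam`:
`u ∈ X`, `u` is not identically zero on `[0,T]`, and `L u + lam u = 0` a.e. on `[0,T]`. -/
def IsEigenfun (n : ℕ) (a : ℕ → ℝ → ℝ) (T : ℝ) (X : Set (ℝ → ℝ)) (lam : ℝ)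
    (u : ℝ → ℝ) : Prop :=
  u ∈ X ∧ (∃ t ∈ Icc 0 T, u t ≠ 0) ∧
  ∀ᵐ t ∂volume, t ∈ Icc 0 T → Lop n a u t + lam * u t = 0

/-- The set of eigenvalues (the spectrum) of `Lop n a` in `X`. -/
def SpecSet (n : ℕ) (a : ℕ → ℝ → ℝ) (T : ℝ) (X : Set (ℝ → ℝ)) : Set ℝ :=
  {lam | ∃ u, IsEigenfun n a T X lam u}

/-- `lam0` is the smallest eigenvalue of `Lop n a` in `X`, it is simple (its
eigenfunctions form a one-dimensional space), and it admits an eigenfunction which is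
strictly positive on the interior of the interval. -/
def IsPrincipal (n : ℕ) (a : ℕ → ℝ → ℝ) (T : ℝ) (X : Set (ℝ → ℝ)) (lam0 : ℝ) : Prop :=
  lam0 ∈ SpecSet n a T X ∧
  (∀ mu ∈ SpecSet n a T X, lam0 ≤ mu) ∧
  (∀ u v, IsEigenfun n a T X lam0 u → IsEigenfun n a T X lam0 v →
      ∃ c : ℝ, ∀ t ∈ Icc 0 T, v t = c * u t) ∧
  ∃ u, IsEigenfun n a T X lam0 u ∧ ∀ t ∈ Ioo 0 T, 0 < u t


/-- Iterated derivative of the reflection `t ↦ u (T - t)`. -/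
lemma iteratedDeriv_reflect (u : ℝ → ℝ) (T : ℝ) (k : ℕ) (t : ℝ) :
    iteratedDeriv k (fun s => u (T - s)) t = (-1 : ℝ) ^ k * iteratedDeriv k u (T - t) := by
  have h2 := iteratedDeriv_comp_neg k (fun x : ℝ => u (T + x)) t
  rw [iteratedDeriv_comp_const_add] at h2
  have hfun : (fun x : ℝ => u (T - x)) = (fun x : ℝ => (fun y : ℝ => u (T + y)) (-x)) := by
    ext s; norm_num [sub_eq_add_neg]
  rw [hfun, h2]
  simp [smul_eq_mul, sub_eq_add_neg]

lemma reflect_mapsTo {T : ℝ} : Set.MapsTo (fun t : ℝ => T - t) (Icc 0 T) (Icc 0 T) := by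
  intro t ht
  simp only [Set.mem_Icc] at *
  constructor <;> linarith [ht.1, ht.2]

/-- Reflection preserves membership in `W^{2n,1}`. -/
lemma memW_reflect {n : ℕ} (hn : 1 ≤ n) {T : ℝ} {u : ℝ → ℝ} (hu : MemW (2 * n) T u) :
    MemW (2 * n) T (fun t => u (T - t)) := by
  obtain ⟨hc, hi, hftc⟩ := hu
  have hrefl : ∀ k, (iteratedDeriv k (fun s => u (T - s)))
      = fun t => (-1 : ℝ) ^ k * iteratedDeriv k u (T - t) :=
    fun k => funext fun t => iteratedDeriv_reflect u T k t
  refine ⟨?_, ?_, ?_⟩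
  · intro k hk
    rw [hrefl k]
    exact (continuousOn_const.mul
      ((hc k hk).comp (continuous_const.sub continuous_id).continuousOn reflect_mapsTo))
  · rw [hrefl (2 * n)]
    have : ((-1 : ℝ) ^ (2 * n)) = 1 := by
      rw [pow_mul]; norm_num
    simp only [this, one_mul]
    have h2 := hi.comp_sub_left T
    simpa using h2.symm
  · intro t ht
    have hodd : (-1 : ℝ) ^ (2 * n - 1) = -1 := by
      have h1 : 2 * n - 1 = 2 * (n - 1) + 1 := by omega
      rw [h1, pow_succ, pow_mul]; norm_num
    have htT : T - t ∈ Icc 0 T := reflect_mapsTo ht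
    have hT0 : T ∈ Icc (0:ℝ) T := ⟨le_trans ht.1 ht.2, le_refl T⟩
    have e1 := hftc (T - t) htT
    have e2 := hftc T hT0
    rw [hrefl (2 * n - 1), hrefl (2 * n), hodd]
    simp only [sub_zero, neg_one_mul]
    have hsplit : (∫ s in (0:ℝ)..(T - t), iteratedDeriv (2 * n) u s)
        + (∫ s in (T - t)..T, iteratedDeriv (2 * n) u s)
        = ∫ s in (0:ℝ)..T, iteratedDeriv (2 * n) u s := by
      have h0T : (0:ℝ) ≤ T := le_trans ht.1 ht.2
      apply intervalIntegral.integral_add_adjacent_intervals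
      · refine hi.mono_set ?_
        rw [Set.uIcc_of_le htT.1, Set.uIcc_of_le h0T]
        exact Set.Icc_subset_Icc (le_refl 0) htT.2
      · refine hi.mono_set ?_
        rw [Set.uIcc_of_le htT.2, Set.uIcc_of_le h0T]
        exact Set.Icc_subset_Icc htT.1 (le_refl T)
    have hcomp : (∫ s in (0:ℝ)..t, (-1:ℝ)^(2*n) * iteratedDeriv (2 * n) u (T - s))
        = ∫ s in (T - t)..T, iteratedDeriv (2 * n) u s := by
      have heven : ((-1 : ℝ) ^ (2 * n)) = 1 := by rw [pow_mul]; norm_num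
      simp only [heven, one_mul]
      rw [intervalIntegral.integral_comp_sub_left (iteratedDeriv (2 * n) u) T]
      norm_num
    rw [hcomp]
    rw [e1, e2]
    linarith [hsplit]

lemma mem_XM2_of_XM1 {n : ℕ} (hn : 1 ≤ n) {T : ℝ} {u : ℝ → ℝ} (hu : u ∈ XM1 n T) :
    (fun t => u (T - t)) ∈ XM2 n T := by
  refine ⟨memW_reflect hn hu.1, fun k hk => ?_⟩
  have h1 := (hu.2 k hk).1
  have h2 := (hu.2 k hk).2
  constructor
  · rw [iteratedDeriv_reflect]
    have : ((-1 : ℝ) ^ (2 * k)) = 1 := by rw [pow_mul]; norm_num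
    simp [this, h2]
  · rw [iteratedDeriv_reflect]
    simp [h1]

lemma mem_XM1_of_XM2 {n : ℕ} (hn : 1 ≤ n) {T : ℝ} {u : ℝ → ℝ} (hu : u ∈ XM2 n T) :
    (fun t => u (T - t)) ∈ XM1 n T := by
  refine ⟨memW_reflect hn hu.1, fun k hk => ?_⟩
  have h1 := (hu.2 k hk).1
  have h2 := (hu.2 k hk).2
  constructor
  · rw [iteratedDeriv_reflect]
    simp [h2]
  · rw [iteratedDeriv_reflect]
    have : ((-1 : ℝ) ^ (2 * k)) = 1 := by rw [pow_mul]; norm_num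
    simp [this, h1]

lemma lop_reflect_ae {n : ℕ} {T : ℝ} {a : ℕ → ℝ → ℝ} {lam : ℝ} {u : ℝ → ℝ}
    (hsym : ∀ᵐ t ∂volume, t ∈ Icc 0 T →
      ∀ k < 2 * n, a k t = (-1 : ℝ) ^ k * a k (T - t))
    (heq : ∀ᵐ t ∂volume, t ∈ Icc 0 T → Lop n a u t + lam * u t = 0) :
    ∀ᵐ t ∂volume, t ∈ Icc 0 T →
      Lop n a (fun s => u (T - s)) t + lam * u (T - t) = 0 := by
  have hmp : MeasurePreserving (fun t : ℝ => T - t) volume volume :=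
    Measure.measurePreserving_sub_left volume T
  have heq' := hmp.quasiMeasurePreserving.ae heq
  filter_upwards [heq', hsym] with t h1 h2 ht
  have h1' := h1 (reflect_mapsTo ht)
  simp only [Lop] at h1' ⊢
  simp only [iteratedDeriv_reflect]
  have heven : ((-1 : ℝ) ^ (2 * n)) = 1 := by rw [pow_mul]; norm_num
  rw [heven, one_mul]
  have hsum : ∑ k ∈ Finset.range (2 * n),
      a k t * ((-1 : ℝ) ^ k * iteratedDeriv k u (T - t))
      = ∑ k ∈ Finset.range (2 * n), a k (T - t) * iteratedDeriv k u (T - t) := by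
    refine Finset.sum_congr rfl fun k hk => ?_
    rw [h2 ht k (Finset.mem_range.mp hk), mul_mul_mul_comm]
    have : (-1 : ℝ) ^ k * (-1 : ℝ) ^ k = 1 := by
      rw [← pow_add]
      exact Even.neg_one_pow ⟨k, rfl⟩
    rw [this, one_mul]
  rw [hsum]
  exact h1'

theorem mixed_spectra_coincide (n : ℕ) (hn : 1 ≤ n) (T : ℝ) (hT : 0 < T)
    (a : ℕ → ℝ → ℝ) (ha : ∀ k < 2 * n, IntervalIntegrable (a k) volume 0 T)
    (hsym : ∀ᵐ t ∂volume, t ∈ Icc 0 T →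
      ∀ k < 2 * n, a k t = (-1 : ℝ) ^ k * a k (T - t)) :
    SpecSet n a T (XM1 n T) = SpecSet n a T (XM2 n T) := by
  have key : ∀ (X Y : Set (ℝ → ℝ)),
      (∀ u, u ∈ X → (fun t => u (T - t)) ∈ Y) →
      SpecSet n a T X ⊆ SpecSet n a T Y := by
    intro X Y hXY lam hlam
    obtain ⟨u, humem, ⟨t0, ht0, hne0⟩, heq⟩ := hlam
    refine ⟨fun t => u (T - t), hXY u humem, ?_, ?_⟩
    · refine ⟨T - t0, reflect_mapsTo ht0, ?_⟩
      have : T - (T - t0) = t0 := by ring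
      simpa [this] using hne0
    · have := lop_reflect_ae hsym heq
      filter_upwards [this] with t h ht
      exact h ht
  ext lam
  constructor
  · exact fun h => key _ _ (fun u hu => mem_XM2_of_XM1 hn hu) h
  · exact fun h => key _ _ (fun u hu => mem_XM1_of_XM2 hn hu) h
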